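/- For every real x > 0, Landen's identity holds: Li₂(1/(1+x)) - Li₂(-x) = π²/6 - (1/2)·ln(1+x)·ln((1+x)/x²). -/

import Mathlib

open Real MeasureTheory

noncomputable def Li2 (x : ℝ) : ℝ := -∫ t in (0:ℝ)..x, Real.log (1 - t) / t

section LandenAux
open intervalIntegral Set Filter

lemma meas_f : Measurable (fun t : ℝ => Real.log (1 - t) / t) :=
  (Real.measurable_log.comp (measurable_const.sub measurable_id)).div measurable_id

lemma bound_small {t : ℝ} (ht : t ≤ 1/2) : |Real.log (1 - t) / t| ≤ 2 := by
  rcases lt_trichotomy t 0 with h | h | h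
  · have h1 : (0:ℝ) < 1 - t := by linarith
    have h2 : Real.log (1 - t) ≤ (1 - t) - 1 := Real.log_le_sub_one_of_pos h1
    have h3 : 0 ≤ Real.log (1 - t) := Real.log_nonneg (by linarith)
    rw [abs_div, abs_of_nonneg h3, abs_of_neg h]
    rw [div_le_iff₀ (by linarith)]
    nlinarith
  · simp [h]
  · have h1 : (0:ℝ) < 1 - t := by linarith
    have h2 : Real.log (1-t)⁻¹ ≤ (1-t)⁻¹ - 1 := Real.log_le_sub_one_of_pos (by positivity)
    rw [Real.log_inv] at h2
    have h4 : Real.log (1 - t) ≤ 0 := Real.log_nonpos (by linarith) (by linarith)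
    have h5 : (1-t)⁻¹ - 1 = t / (1-t) := by field_simp; ring
    have h6 : t / (1 - t) ≤ 2 * t := by
      rw [div_le_iff₀ h1]; nlinarith
    rw [abs_div, abs_of_nonpos h4, abs_of_pos h, div_le_iff₀ h]
    nlinarith

lemma neg_log_le {u : ℝ} (hu : 0 < u) : -Real.log u ≤ 2 * u ^ (-(1/2) : ℝ) := by
  have h1 : (0:ℝ) < u ^ (-(1/2) : ℝ) := Real.rpow_pos_of_pos hu _
  have h2 : Real.log (u ^ (-(1/2) : ℝ)) ≤ u ^ (-(1/2) : ℝ) - 1 :=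
    Real.log_le_sub_one_of_pos h1
  rw [Real.log_rpow hu] at h2
  nlinarith

lemma bound_near_one {t : ℝ} (ht : t ∈ Set.Ioc (1/2 : ℝ) 1) :
    |Real.log (1 - t) / t| ≤ 4 * (1 - t) ^ (-(1/2) : ℝ) := by
  rcases eq_or_lt_of_le ht.2 with h | h
  · subst h
    simp [Real.log_zero, Real.zero_rpow (show (-(1/2):ℝ) ≠ 0 by norm_num)]
  · have h0 : (0:ℝ) < 1 - t := by linarith
    have ht0 : (0:ℝ) < t := by have := ht.1; linarith
    have h4 : Real.log (1 - t) ≤ 0 := Real.log_nonpos (by linarith) (by linarith)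
    have h5 := neg_log_le h0
    rw [abs_div, abs_of_nonpos h4, abs_of_pos ht0, div_le_iff₀ ht0]
    have h6 : (0:ℝ) < (1 - t) ^ (-(1/2) : ℝ) := Real.rpow_pos_of_pos h0 _
    nlinarith [ht.1]

lemma intInt_small {a b : ℝ} (ha : a ≤ 1/2) (hb : b ≤ 1/2) :
    IntervalIntegrable (fun t : ℝ => Real.log (1 - t) / t) volume a b := by
  rw [intervalIntegrable_iff]
  apply Measure.integrableOn_of_bounded (M := 2) (by rw [Set.uIoc]; exact measure_Ioc_lt_top.ne) meas_f.aestronglyMeasurable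
  refine ae_restrict_of_forall_mem measurableSet_uIoc (fun t ht => ?_)
  · skip
    have : t ≤ 1/2 := by
      rcases Set.mem_uIoc.1 ht with h | h
      · exact le_trans h.2 hb
      · exact le_trans h.2 ha
    simp only [Real.norm_eq_abs]
    exact bound_small this

lemma intInt_one_half : IntervalIntegrable (fun t : ℝ => Real.log (1 - t) / t) volume (1/2) 1 := by
  have hg : IntervalIntegrable (fun t : ℝ => 4 * (1 - t) ^ (-(1/2) : ℝ)) volume (1/2) 1 := by
    have h := (intervalIntegral.intervalIntegrable_rpow' (a := 0) (b := 1/2)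
      (r := (-(1/2) : ℝ)) (by norm_num)).comp_sub_left 1
    norm_num at h
    exact (h.symm).const_mul 4
  apply hg.mono_fun meas_f.aestronglyMeasurable
  refine ae_restrict_of_forall_mem measurableSet_uIoc (fun t ht => ?_)
  have ht' : t ∈ Set.Ioc (1/2 : ℝ) 1 := by
    rcases Set.mem_uIoc.1 ht with h | h
    · exact h
    · exact absurd h.2 (by norm_num [h.1]; linarith [h.1])
  have := bound_near_one ht'
  simp only [Real.norm_eq_abs]
  exact le_trans this (le_abs_self _)

lemma intInt (y : ℝ) (hy : y ≤ 1) :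
    IntervalIntegrable (fun t : ℝ => Real.log (1 - t) / t) volume 0 y := by
  rcases le_or_gt y (1/2) with h | h
  · exact intInt_small (by norm_num) h
  · exact (intInt_small (by norm_num) le_rfl).trans
      (intInt_one_half.mono_set (by
        rw [Set.uIcc_of_le (by linarith), Set.uIcc_of_le (by norm_num)]
        exact Set.Icc_subset_Icc le_rfl hy))



lemma Li2_hasDerivAt {y : ℝ} (hy : y < 1) (hy0 : y ≠ 0) :
    HasDerivAt Li2 (-(Real.log (1 - y) / y)) y := by
  have h1 : HasDerivAt (fun x => ∫ t in (0:ℝ)..x, Real.log (1 - t) / t)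
      (Real.log (1 - y) / y) y := by
    apply intervalIntegral.integral_hasDerivAt_right (intInt y hy.le)
    · exact ⟨Set.univ, Filter.univ_mem, meas_f.aestronglyMeasurable.restrict⟩
    · exact ((Real.continuousAt_log (by linarith : (1:ℝ) - y ≠ 0)).comp
        ((continuous_const.sub continuous_id).continuousAt)).div continuousAt_id hy0
  exact h1.neg

lemma hasSum_geom_int {t : ℝ} (ht : t ∈ Set.Ioo (0:ℝ) 1) :
    HasSum (fun n : ℕ => t ^ n / (n + 1)) (-Real.log (1 - t) / t) := by
  have h := Real.hasSum_pow_div_log_of_abs_lt_one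
    (x := t) (by rw [abs_of_pos ht.1]; exact ht.2)
  have h2 := h.div_const t
  have ht0 : t ≠ 0 := ne_of_gt ht.1
  convert h2 using 2 with n
  · rfl
  rw [pow_succ]
  field_simp

lemma integral_pow_Ioo (n : ℕ) :
    ∫ t in Set.Ioo (0:ℝ) 1, t ^ n / (n + 1) = 1 / ((n:ℝ) + 1) ^ 2 := by
  rw [← MeasureTheory.integral_Ioc_eq_integral_Ioo,
    ← intervalIntegral.integral_of_le (by norm_num : (0:ℝ) ≤ 1)]
  rw [intervalIntegral.integral_div, integral_pow]
  push_cast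
  rw [one_pow, zero_pow (by omega)]
  field_simp
  ring

lemma hasSum_inv_sq : HasSum (fun n : ℕ => 1 / ((n:ℝ) + 1) ^ 2) (Real.pi ^ 2 / 6) := by
  have h : HasSum (fun n : ℕ => 1 / (((n + 1 : ℕ)):ℝ) ^ 2) (Real.pi ^ 2 / 6) := by
    rw [hasSum_nat_add_iff (f := fun n : ℕ => 1 / (n:ℝ) ^ 2) 1]
    simpa using hasSum_zeta_two
  have h2 := h
  push_cast at h2
  exact h2

lemma Li2_one : Li2 1 = Real.pi ^ 2 / 6 := by
  have hnorm : ∀ n : ℕ, ∫ t in Set.Ioo (0:ℝ) 1, ‖t ^ n / ((n:ℝ) + 1)‖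
      = 1 / ((n:ℝ) + 1) ^ 2 := by
    intro n
    rw [← integral_pow_Ioo n]
    refine setIntegral_congr_fun measurableSet_Ioo (fun t ht => ?_)
    have h0 : (0:ℝ) ≤ t := le_of_lt ht.1
    rw [Real.norm_eq_abs, abs_of_nonneg (by positivity)]
  have hint : ∀ n : ℕ, Integrable (fun t : ℝ => t ^ n / ((n:ℝ) + 1))
      (volume.restrict (Set.Ioo (0:ℝ) 1)) := by
    intro n
    exact (((continuous_pow n).div_const _).integrableOn_Icc (a := 0) (b := 1)).mono_set
      Set.Ioo_subset_Icc_self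
  have key := MeasureTheory.integral_tsum_of_summable_integral_norm
      (μ := volume.restrict (Set.Ioo (0:ℝ) 1)) hint ?_
  swap
  · simp_rw [hnorm]
    exact hasSum_inv_sq.summable
  have lhs : ∑' n : ℕ, ∫ t in Set.Ioo (0:ℝ) 1, t ^ n / ((n:ℝ) + 1)
      = Real.pi ^ 2 / 6 := by
    simp_rw [integral_pow_Ioo]
    exact hasSum_inv_sq.tsum_eq
  have rhs : ∫ t in Set.Ioo (0:ℝ) 1, (∑' n : ℕ, t ^ n / ((n:ℝ) + 1))
      = ∫ t in Set.Ioo (0:ℝ) 1, -Real.log (1 - t) / t := by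
    refine setIntegral_congr_fun measurableSet_Ioo (fun t ht => ?_)
    exact (hasSum_geom_int ht).tsum_eq
  rw [lhs, rhs] at key
  rw [Li2, intervalIntegral.integral_of_le (by norm_num : (0:ℝ) ≤ 1),
    MeasureTheory.integral_Ioc_eq_integral_Ioo, key, ← MeasureTheory.integral_neg]
  exact setIntegral_congr_fun measurableSet_Ioo (fun t _ => (neg_div _ _).symm)


noncomputable def F (x : ℝ) : ℝ :=
  Li2 (1 / (1 + x)) - Li2 (-x) + (1/2) * Real.log (1 + x) * Real.log ((1 + x) / x ^ 2)

lemma F_deriv {x : ℝ} (hx : 0 < x) : HasDerivAt F 0 x := by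
  have hx1 : (0:ℝ) < 1 + x := by linarith
  have hx1' : (1:ℝ) + x ≠ 0 := ne_of_gt hx1
  have hu0 : (0:ℝ) < 1 / (1 + x) := by positivity
  have hu1 : 1 / (1 + x) < 1 := by
    rw [div_lt_one hx1]; linarith
  -- A : derivative of Li2 (1/(1+x))
  have hinner : HasDerivAt (fun y : ℝ => 1 / (1 + y)) (-1 / (1 + x) ^ 2) x := by
    have h1 : HasDerivAt (fun y : ℝ => 1 + y) 1 x := (hasDerivAt_id x).const_add 1
    have h2 := h1.inv hx1'
    simpa [one_div, Pi.inv_def] using h2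
  have hA : HasDerivAt (fun y : ℝ => Li2 (1 / (1 + y)))
      (-(Real.log (1 - 1 / (1 + x)) / (1 / (1 + x))) * (-1 / (1 + x) ^ 2)) x :=
    (Li2_hasDerivAt hu1 (ne_of_gt hu0)).comp (h₂ := Li2) x hinner
  -- B : derivative of Li2 (-x)
  have hB : HasDerivAt (fun y : ℝ => Li2 (-y))
      (-(Real.log (1 - -x) / (-x)) * (-1)) x :=
    (Li2_hasDerivAt (by linarith) (by linarith)).comp x (hasDerivAt_neg x)
  -- C : derivative of the log product
  have l1 : HasDerivAt (fun y : ℝ => Real.log (1 + y)) ((1 + x)⁻¹) x := by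
    have := (Real.hasDerivAt_log hx1').comp x ((hasDerivAt_id x).const_add 1)
    simpa [Function.comp_def] using this
  have l2 : HasDerivAt Real.log x⁻¹ x := Real.hasDerivAt_log (ne_of_gt hx)
  have hG : HasDerivAt (fun y : ℝ => (1/2) * Real.log (1 + y) *
      (Real.log (1 + y) - 2 * Real.log y))
      ((1/2 * (1 + x)⁻¹) * (Real.log (1 + x) - 2 * Real.log x) +
        (1/2) * Real.log (1 + x) * ((1 + x)⁻¹ - 2 * x⁻¹)) x :=
    (l1.const_mul (1/2)).mul (l1.sub (l2.const_mul 2))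
  have hC : HasDerivAt (fun y : ℝ => (1/2) * Real.log (1 + y) *
      Real.log ((1 + y) / y ^ 2))
      ((1/2 * (1 + x)⁻¹) * (Real.log (1 + x) - 2 * Real.log x) +
        (1/2) * Real.log (1 + x) * ((1 + x)⁻¹ - 2 * x⁻¹)) x := by
    apply hG.congr_of_eventuallyEq
    filter_upwards [eventually_gt_nhds hx] with y hy
    rw [Real.log_div (by linarith) (pow_ne_zero 2 (ne_of_gt hy)), Real.log_pow]
    push_cast
    ring
  have htot := (hA.sub hB).add hC
  have hlog : Real.log (1 - 1 / (1 + x)) = Real.log x - Real.log (1 + x) := by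
    have : 1 - 1 / (1 + x) = x / (1 + x) := by field_simp; ring
    rw [this, Real.log_div (ne_of_gt hx) hx1']
  convert htot using 1
  · rfl
  · rfl
  · rfl
  rw [hlog]
  have h1x : Real.log (1 - -x) = Real.log (1 + x) := by ring_nf
  rw [h1x]
  field_simp
  ring



lemma F_const {a b : ℝ} (ha : 0 < a) (hab : a ≤ b) : F b = F a := by
  have hcont : ContinuousOn F (Set.Icc a b) := fun t ht =>
    (F_deriv (lt_of_lt_of_le ha ht.1)).continuousAt.continuousWithinAt
  have hderiv : ∀ t ∈ Set.Ico a b, HasDerivWithinAt F 0 (Set.Ici t) t := fun t ht =>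
    (F_deriv (lt_of_lt_of_le ha ht.1)).hasDerivWithinAt
  exact constant_of_has_deriv_right_zero hcont hderiv b ⟨hab, le_rfl⟩

lemma F_eq_one {x : ℝ} (hx : 0 < x) : F x = F 1 := by
  rcases le_or_gt x 1 with h | h
  · exact (F_const hx h).symm
  · exact F_const one_pos h.le

lemma cont_prim_zero_one :
    ContinuousOn (fun y => ∫ t in (0:ℝ)..y, Real.log (1 - t) / t) (Set.Icc (0:ℝ) 1) := by
  have := intervalIntegral.continuousOn_primitive_interval'
    (intInt 1 le_rfl) (Set.left_mem_uIcc (a := (0:ℝ)) (b := 1))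
  rwa [Set.uIcc_of_le (by norm_num : (0:ℝ) ≤ 1)] at this

lemma cont_prim_neg :
    ContinuousOn (fun y => ∫ t in (0:ℝ)..y, Real.log (1 - t) / t) (Set.Icc (-1:ℝ) 0) := by
  have := intervalIntegral.continuousOn_primitive_interval'
    (intInt (-1) (by norm_num)) (Set.left_mem_uIcc (a := (0:ℝ)) (b := -1))
  rwa [Set.uIcc_of_ge (by norm_num : (-1:ℝ) ≤ 0)] at this

lemma T1 : Tendsto (fun x => Li2 (1 / (1 + x))) (nhdsWithin 0 (Set.Ioi 0)) (nhds (Li2 1)) := by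
  have h1 : Tendsto (fun x : ℝ => 1 / (1 + x)) (nhdsWithin 0 (Set.Ioi 0))
      (nhdsWithin 1 (Set.Icc (0:ℝ) 1)) := by
    apply tendsto_nhdsWithin_of_tendsto_nhds_of_eventually_within
    · have : Tendsto (fun x : ℝ => 1 / (1 + x)) (nhds 0) (nhds 1) := by
        have : ContinuousAt (fun x : ℝ => 1 / (1 + x)) 0 := by
          apply ContinuousAt.div continuousAt_const (by fun_prop) (by norm_num)
        simpa using this.tendsto
      exact this.mono_left nhdsWithin_le_nhds
    · filter_upwards [self_mem_nhdsWithin] with x (hx : 0 < x)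
      have hx1 : (0:ℝ) < 1 + x := by linarith
      constructor
      · positivity
      · rw [div_le_one hx1]; linarith
  have h2 : ContinuousWithinAt (fun y => ∫ t in (0:ℝ)..y, Real.log (1 - t) / t)
      (Set.Icc (0:ℝ) 1) 1 := cont_prim_zero_one 1 (by norm_num)
  have := h2.tendsto.comp h1
  simpa [Li2] using this.neg

lemma T2 : Tendsto (fun x : ℝ => Li2 (-x)) (nhdsWithin 0 (Set.Ioi 0)) (nhds 0) := by
  have h1 : Tendsto (fun x : ℝ => -x) (nhdsWithin 0 (Set.Ioi 0))
      (nhdsWithin 0 (Set.Icc (-1:ℝ) 0)) := by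
    apply tendsto_nhdsWithin_of_tendsto_nhds_of_eventually_within
    · have h := (continuous_neg : Continuous (fun x : ℝ => -x)).tendsto 0
      rw [neg_zero] at h
      exact h.mono_left nhdsWithin_le_nhds
    · filter_upwards [Ioo_mem_nhdsGT one_pos] with x hx
      exact ⟨by linarith [hx.2], by linarith [hx.1]⟩
  have h2 : ContinuousWithinAt (fun y => ∫ t in (0:ℝ)..y, Real.log (1 - t) / t)
      (Set.Icc (-1:ℝ) 0) 0 := cont_prim_neg 0 (by norm_num)
  have h3 := h2.tendsto.comp h1
  have h4 : (∫ t in (0:ℝ)..(0:ℝ), Real.log (1 - t) / t) = 0 := by simp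
  rw [h4] at h3
  have := h3.neg
  rw [neg_zero] at this
  exact this.congr (fun x => by simp [Li2])

lemma T3 : Tendsto (fun x : ℝ => (1/2) * Real.log (1 + x) * Real.log ((1 + x) / x ^ 2))
    (nhdsWithin 0 (Set.Ioi 0)) (nhds 0) := by
  have heq : ∀ x ∈ Set.Ioi (0:ℝ), (1/2) * Real.log (1 + x) * Real.log ((1 + x) / x ^ 2)
      = (1/2) * Real.log (1 + x) * Real.log (1 + x) - Real.log (1 + x) * Real.log x := by
    intro x hx
    have hx' : (0:ℝ) < x := hx
    rw [Real.log_div (by linarith) (pow_ne_zero 2 (ne_of_gt hx')), Real.log_pow]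
    push_cast
    ring
  have t1 : Tendsto (fun x : ℝ => (1/2) * Real.log (1 + x) * Real.log (1 + x))
      (nhdsWithin 0 (Set.Ioi 0)) (nhds 0) := by
    have hc : ContinuousAt (fun x : ℝ => (1/2) * Real.log (1 + x) * Real.log (1 + x)) 0 := by
      have h := (Real.continuousAt_log (by norm_num : (1:ℝ) + 0 ≠ 0)).comp
        (by fun_prop : ContinuousAt (fun x : ℝ => 1 + x) 0)
      exact (h.const_mul _).mul h
    have := hc.tendsto.mono_left (nhdsWithin_le_nhds (s := Set.Ioi (0:ℝ)))
    simpa using this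
  have t2 : Tendsto (fun x : ℝ => Real.log (1 + x) * Real.log x)
      (nhdsWithin 0 (Set.Ioi 0)) (nhds 0) := by
    -- squeeze between x * log x and 0
    have hxlogx : Tendsto (fun x : ℝ => x * Real.log x) (nhdsWithin 0 (Set.Ioi 0)) (nhds 0) := by
      have := (Real.continuous_mul_log.tendsto 0).mono_left
        (nhdsWithin_le_nhds (s := Set.Ioi (0:ℝ)))
      simpa using this
    have hneg : Tendsto (fun x : ℝ => -(Real.log (1 + x) * Real.log x))
        (nhdsWithin 0 (Set.Ioi 0)) (nhds 0) := by
      have hg : Tendsto (fun x : ℝ => -(x * Real.log x)) (nhdsWithin 0 (Set.Ioi 0))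
          (nhds 0) := by
        have := hxlogx.neg; rwa [neg_zero] at this
      refine squeeze_zero' ?_ ?_ hg
      · filter_upwards [Ioo_mem_nhdsGT one_pos] with x hx
        have h1 : 0 ≤ Real.log (1 + x) := Real.log_nonneg (by linarith [hx.1])
        have h2 : Real.log x ≤ 0 := Real.log_nonpos hx.1.le hx.2.le
        nlinarith
      · filter_upwards [Ioo_mem_nhdsGT one_pos] with x hx
        have h1 : Real.log (1 + x) ≤ x := by
          have := Real.log_le_sub_one_of_pos (show (0:ℝ) < 1 + x by linarith [hx.1])
          linarith
        have h2 : Real.log x ≤ 0 := Real.log_nonpos hx.1.le hx.2.le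
        have := mul_le_mul_of_nonpos_right h1 h2
        linarith
    have := hneg.neg
    rw [neg_zero] at this
    simpa using this
  have := t1.sub t2
  rw [sub_zero] at this
  apply this.congr'
  filter_upwards [self_mem_nhdsWithin] with x hx
  exact (heq x hx).symm

theorem landen_identity (x : ℝ) (hx : 0 < x) :
    Li2 (1 / (1 + x)) - Li2 (-x)
      = Real.pi ^ 2 / 6 - (1/2) * Real.log (1 + x) * Real.log ((1 + x) / x ^ 2) := by
  have hFlim : Tendsto F (nhdsWithin 0 (Set.Ioi 0)) (nhds (Li2 1)) := by
    have := (T1.sub T2).add T3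
    rw [sub_zero, add_zero] at this
    exact this
  have hFconst : Tendsto F (nhdsWithin 0 (Set.Ioi 0)) (nhds (F 1)) := by
    apply Tendsto.congr' ?_ tendsto_const_nhds
    filter_upwards [self_mem_nhdsWithin] with y hy
    exact (F_eq_one hy).symm
  have hF1 : F 1 = Li2 1 := tendsto_nhds_unique hFconst hFlim
  have hFx : F x = Real.pi ^ 2 / 6 := by
    rw [F_eq_one hx, hF1, Li2_one]
  have := hFx
  unfold F at this
  linarith

end LandenAux
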